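/- arXiv:1302.1329 — 2 statements merged into one kernel-verified Lean document; each statement's English description precedes it below -/
import Mathlib

section
/- For N = 2k+1 odd with k ≥ 1, tr(S^{k+1} - t·S^k) = ((1+√(1+4t))/2)^N + ((1-√(1+4t))/2)^N, where S = [[1,1,0],[t,t,1],[t,t,t]]; equivalently tr(S^{k+1}) - t·tr(S^k) = x^N + y^N where x, y are the roots of z² - z - t. -/
open Polynomial

noncomputable def Smat : Matrix (Fin 3) (Fin 3) (Polynomial ℤ) :=
  !![1, 1, 0; X, X, 1; X, X, X]

set_option maxHeartbeats 1000000 in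
lemma Smat_cube : Smat * (Smat * Smat) = (2 * X + 1 : Polynomial ℤ) • (Smat * Smat) - (X ^ 2 : Polynomial ℤ) • Smat := by
  refine Matrix.ext fun i j => ?_
  fin_cases i <;> fin_cases j <;>
    · simp [Smat, Matrix.mul_apply, Fin.sum_univ_three, Matrix.vecHead, Matrix.vecTail]
      ring

lemma Smat_pow_rec (n : ℕ) :
    Smat ^ (n + 3) = (2 * X + 1 : Polynomial ℤ) • Smat ^ (n + 2) - (X ^ 2 : Polynomial ℤ) • Smat ^ (n + 1) := by
  have h : Smat ^ (n + 3) = Smat ^ n * (Smat * (Smat * Smat)) := by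
    rw [show n + 3 = n + 1 + 1 + 1 from rfl, pow_succ, pow_succ, pow_succ, mul_assoc, mul_assoc]
  have h2 : Smat ^ n * (Smat * Smat) = Smat ^ (n + 2) := by
    rw [show n + 2 = n + 1 + 1 from rfl, pow_succ, pow_succ, mul_assoc]
  have h1 : Smat ^ n * Smat = Smat ^ (n + 1) := (pow_succ Smat n).symm
  rw [h, Smat_cube, Matrix.mul_sub, Matrix.mul_smul, Matrix.mul_smul, h2, h1]

lemma trace_rec (n : ℕ) :
    Matrix.trace (Smat ^ (n + 3)) =
      (2 * X + 1) * Matrix.trace (Smat ^ (n + 2)) - X ^ 2 * Matrix.trace (Smat ^ (n + 1)) := by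
  rw [Smat_pow_rec, Matrix.trace_sub, Matrix.trace_smul, Matrix.trace_smul, smul_eq_mul, smul_eq_mul]

lemma tr1 : Matrix.trace Smat = 1 + 2 * X := by
  simp [Smat, Matrix.trace_fin_three]; ring

lemma tr2 : Matrix.trace (Smat ^ 2) = 1 + 4 * X + 2 * X ^ 2 := by
  rw [pow_two]
  simp [Smat, Matrix.trace_fin_three, Matrix.mul_apply, Fin.sum_univ_three]
  ring

lemma tr3 : Matrix.trace (Smat ^ 3) = 1 + 6 * X + 9 * X ^ 2 + 2 * X ^ 3 := by
  have e : Smat ^ 3 = Smat ^ 2 * Smat := by norm_num [pow_succ]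
  rw [e, pow_two]
  simp [Smat, Matrix.trace_fin_three, Matrix.mul_apply, Fin.sum_univ_three]
  ring

/-- tr(S^{k+1}) - t·tr(S^k) = x^N + y^N (N = 2k+1) whenever x, y are the roots of
z² - z - t, i.e. x + y = 1 and x·y = -t. -/
theorem trace_eq_root_powers (k : ℕ) (hk : 1 ≤ k)
    (R : Type*) [CommRing R] (x y : R) (hsum : x + y = 1) :
    Polynomial.aeval (-(x * y))
        (Matrix.trace (Smat ^ (k + 1)) - X * Matrix.trace (Smat ^ k))
      = x ^ (2 * k + 1) + y ^ (2 * k + 1) := by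
  have hy : y = 1 - x := by rw [← hsum]; ring
  subst hy
  set P : ℕ → Prop := fun k =>
    Polynomial.aeval (-(x * (1 - x)))
        (Matrix.trace (Smat ^ (k + 1)) - X * Matrix.trace (Smat ^ k))
      = x ^ (2 * k + 1) + (1 - x) ^ (2 * k + 1) with hP
  suffices h : ∀ n, P (n + 1) ∧ P (n + 2) by
    obtain ⟨m, rfl⟩ : ∃ m, k = m + 1 := ⟨k - 1, by omega⟩
    exact (h m).1
  intro n
  induction n with
  | zero =>
    constructor
    · show Polynomial.aeval (-(x * (1 - x)))
        (Matrix.trace (Smat ^ 2) - X * Matrix.trace (Smat ^ 1)) = _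
      rw [pow_one, tr1, tr2]
      simp [map_add, map_mul, map_pow, map_ofNat]
      ring
    · show Polynomial.aeval (-(x * (1 - x)))
        (Matrix.trace (Smat ^ 3) - X * Matrix.trace (Smat ^ 2)) = _
      rw [tr2, tr3]
      simp [map_add, map_mul, map_pow, map_ofNat]
      ring
  | succ n ih =>
    refine ⟨ih.2, ?_⟩
    show Polynomial.aeval (-(x * (1 - x)))
        (Matrix.trace (Smat ^ (n + 4)) - X * Matrix.trace (Smat ^ (n + 3))) = _
    have key : Matrix.trace (Smat ^ (n + 4)) - X * Matrix.trace (Smat ^ (n + 3)) =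
        (2 * X + 1) * (Matrix.trace (Smat ^ (n + 3)) - X * Matrix.trace (Smat ^ (n + 2)))
          - X ^ 2 * (Matrix.trace (Smat ^ (n + 2)) - X * Matrix.trace (Smat ^ (n + 1))) := by
      have h1 := trace_rec (n + 1)
      have h2 := trace_rec n
      rw [show n + 1 + 3 = n + 4 from rfl, show n + 1 + 2 = n + 3 from rfl,
        show n + 1 + 1 = n + 2 from rfl] at h1
      rw [h1, h2]; ring
    rw [key, map_sub, map_mul, map_mul, ih.1, ih.2]
    simp [map_add, map_mul, map_pow, map_ofNat]
    ring
end

section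
/- For odd N = 2k+1 ≥ 3, the number of v-dimensional faces of the injective hull of the N-cycle equals (1/2^(N-2v-1))·Σ_{s=v}^{k} C(N, 2s)·C(s, v)·5^(s-v), and this also equals Σ_{s=v}^{k} (N/(N-s))·C(N-s, s)·C(s, v); in particular these two expressions are equal for all 0 ≤ v ≤ k. -/
open Polynomial Finset
noncomputable def fP : ℕ → Polynomial ℚ
  | 0 => 1
  | 1 => 1
  | (N+2) => 2 * fP (N+1) + (X - 1) * fP N

noncomputable def aP : ℕ → Polynomial ℚ
  | 0 => 1
  | 1 => 1
  | (N+2) => aP (N+1) + X * aP N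

noncomputable def gP : ℕ → Polynomial ℚ
  | 0 => 2
  | 1 => 1
  | (N+2) => gP (N+1) + X * gP N

lemma fP_coeff : ∀ N s, (fP N).coeff s = (N.choose (2*s) : ℚ) := by
  intro N
  induction N using Nat.twoStepInduction with
  | zero => intro s; cases s with
    | zero => simp [fP]
    | succ t => simp [fP, Polynomial.coeff_one, Nat.choose_eq_zero_of_lt]
  | one => intro s; cases s with
    | zero => simp [fP]
    | succ t => simp [fP, coeff_one]; rw [Nat.choose_eq_zero_of_lt (by omega)]; simp
  | more N ih2 ih1 =>
    intro s
    show (2 * fP (N+1) + (X - 1) * fP N).coeff s = _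
    rw [coeff_add, coeff_ofNat_mul, sub_mul, coeff_sub, one_mul, ih1]
    cases s with
    | zero =>
      rw [mul_coeff_zero, coeff_X_zero, zero_mul, ih2]
      norm_num
    | succ t =>
      rw [coeff_X_mul, ih2, ih2, show 2*(t+1) = 2*t+2 from by omega]
      have q1 : ((N + 2).choose (2*t+2) : ℚ)
          = (N+1).choose (2*t+1) + (N+1).choose (2*t+2) := by
        rw [show N+2 = (N+1)+1 from rfl, show 2*t+2 = (2*t+1)+1 from rfl,
          Nat.choose_succ_succ]; push_cast; ring
      have q2 : ((N + 1).choose (2*t+1) : ℚ) = N.choose (2*t) + N.choose (2*t+1) := by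
        rw [show 2*t+1 = (2*t)+1 from rfl, Nat.choose_succ_succ]; push_cast; ring
      have q3 : ((N + 1).choose (2*t+2) : ℚ) = N.choose (2*t+1) + N.choose (2*t+2) := by
        rw [show 2*t+2 = (2*t+1)+1 from rfl, Nat.choose_succ_succ]; push_cast; ring
      push_cast
      linarith

lemma aP_coeff : ∀ N s, (aP N).coeff s = ((N - s).choose s : ℚ) := by
  intro N
  induction N using Nat.twoStepInduction with
  | zero => intro s; cases s with
    | zero => simp [aP]
    | succ t => simp [aP, Polynomial.coeff_one, Nat.choose_eq_zero_of_lt]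
  | one => intro s; cases s with
    | zero => simp [aP]
    | succ t =>
      simp only [aP, coeff_one, if_neg (Nat.succ_ne_zero t)]
      rw [show 1 - (t+1) = 0 from by omega, Nat.choose_eq_zero_of_lt (by omega)]
      simp
  | more N ih2 ih1 =>
    intro s
    show (aP (N+1) + X * aP N).coeff s = _
    rw [coeff_add]
    cases s with
    | zero =>
      rw [mul_coeff_zero, coeff_X_zero, zero_mul, ih1]
      simp
    | succ t =>
      rw [coeff_X_mul, ih1, ih2]
      rcases le_or_gt t N with h | h
      · rw [show N + 1 - (t+1) = N - t from by omega,
          show N + 2 - (t+1) = (N - t) + 1 from by omega,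
          Nat.choose_succ_succ]
        push_cast; ring
      · rw [show N + 1 - (t+1) = 0 from by omega, show N - t = 0 from by omega,
          show N + 2 - (t+1) = if t = N + 1 then 0 else 0 from by split <;> omega]
        rw [Nat.choose_eq_zero_of_lt (by omega), Nat.choose_eq_zero_of_lt (by omega)]
        split <;> · rw [Nat.choose_eq_zero_of_lt (by omega)]; simp

lemma fP_natDegree : ∀ N, (fP N).natDegree ≤ N := by
  intro N
  induction N using Nat.twoStepInduction with
  | zero => simp [fP]
  | one => simp [fP]
  | more N ih2 ih1 =>
    show (2 * fP (N+1) + (X - 1) * fP N).natDegree ≤ N + 2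
    refine le_trans (natDegree_add_le _ _) ?_
    refine max_le (le_trans (natDegree_mul_le) ?_) (le_trans (natDegree_mul_le) ?_)
    · simp; omega
    · have : (X - 1 : ℚ[X]).natDegree ≤ 1 := by
        refine le_trans (natDegree_sub_le _ _) ?_; simp
      omega

lemma aP_natDegree : ∀ N, (aP N).natDegree ≤ N := by
  intro N
  induction N using Nat.twoStepInduction with
  | zero => simp [aP]
  | one => simp [aP]
  | more N ih2 ih1 =>
    show (aP (N+1) + X * aP N).natDegree ≤ N + 2
    refine le_trans (natDegree_add_le _ _) ?_
    refine max_le (by omega) (le_trans (natDegree_mul_le) ?_)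
    simp; omega

lemma main_comp : ∀ N, 2 * (fP N).comp (4 * X + 5)
    = 2^N * (gP N).comp (X + 1) := by
  intro N
  induction N using Nat.twoStepInduction with
  | zero => simp [fP, gP]
  | one => simp [fP, gP]
  | more N ih2 ih1 =>
    rw [show fP (N+2) = 2 * fP (N+1) + (X - 1) * fP N from rfl,
      show gP (N+2) = gP (N+1) + X * gP N from rfl]
    simp only [add_comp, mul_comp, sub_comp, X_comp, one_comp, ofNat_comp]
    linear_combination (2 : ℚ[X]) * ih1 + (4*X + 4) * ih2

lemma gP_eq : ∀ N, gP (N+2) = aP (N+2) + X * aP N := by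
  intro N
  induction N using Nat.twoStepInduction with
  | zero => show gP 1 + X * gP 0 = (aP 1 + X * aP 0) + X * aP 0; simp [gP, aP]; ring
  | one =>
    show gP 2 + X * gP 1 = (aP 2 + X * aP 1) + X * aP 1
    show (gP 1 + X * gP 0) + X * gP 1 = ((aP 1 + X * aP 0) + X * aP 1) + X * aP 1
    simp [gP, aP]; ring
  | more N ih2 ih1 =>
    have h4 : gP (N+4) = gP (N+3) + X * gP (N+2) := rfl
    have a4 : aP (N+4) = aP (N+3) + X * aP (N+2) := rfl
    have a2 : aP (N+2) = aP (N+1) + X * aP N := rfl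
    show gP (N+4) = aP (N+4) + X * aP (N+2)
    rw [h4, ih1, ih2, a4, a2]
    ring

lemma poly_sum_comp (c : ℕ → ℚ) (n : ℕ) (q : ℚ[X]) :
    (∑ i ∈ range n, C (c i) * X ^ i).comp q = ∑ i ∈ range n, C (c i) * q ^ i := by
  induction n with
  | zero => simp
  | succ m ih =>
    rw [sum_range_succ, sum_range_succ, add_comp, mul_comp, C_comp, pow_comp, X_comp, ih]

lemma fP_as_sum (N : ℕ) : fP N = ∑ s ∈ range (N+1), C ((N.choose (2*s) : ℚ)) * X ^ s := by
  conv_lhs => rw [(fP N).as_sum_range' (N+1) (by have := fP_natDegree N; omega)]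
  exact Finset.sum_congr rfl fun i _ => by rw [fP_coeff, C_mul_X_pow_eq_monomial]

lemma aP_as_sum (N : ℕ) : aP N = ∑ s ∈ range (N+1), C (((N-s).choose s : ℚ)) * X ^ s := by
  conv_lhs => rw [(aP N).as_sum_range' (N+1) (by have := aP_natDegree N; omega)]
  exact Finset.sum_congr rfl fun i _ => by rw [aP_coeff, C_mul_X_pow_eq_monomial]

lemma sigma_pow_coeff (s v : ℕ) :
    ((4 * X + 5 : ℚ[X]) ^ s).coeff v = (s.choose v : ℚ) * 4^v * 5^(s-v) := by
  have h45 : (4 * X + 5 : ℚ[X]) = C 4 * (X + C (5/4)) := by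
    rw [mul_add, ← C_mul]
    norm_num [map_ofNat]
  rw [h45, mul_pow, ← C_pow, coeff_C_mul, coeff_X_add_C_pow]
  rcases le_or_gt v s with h | h
  · have e : (4:ℚ)^s = 4^v * 4^(s-v) := by rw [← pow_add]; congr 1; omega
    rw [e, div_pow]
    have h4 : (4:ℚ)^(s-v) ≠ 0 := by positivity
    field_simp
  · rw [Nat.choose_eq_zero_of_lt h]
    simp

lemma coeffA (N v : ℕ) : ((fP N).comp (4 * X + 5)).coeff v
    = ∑ s ∈ range (N+1), (N.choose (2*s) : ℚ) * (s.choose v) * 4^v * 5^(s-v) := by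
  rw [fP_as_sum, poly_sum_comp, finset_sum_coeff]
  exact Finset.sum_congr rfl fun s _ => by rw [coeff_C_mul, sigma_pow_coeff]; ring

lemma coeff_acomp (M v : ℕ) : ((aP M).comp (X+1)).coeff v
    = ∑ s ∈ range (M+1), ((M-s).choose s : ℚ) * s.choose v := by
  rw [aP_as_sum, poly_sum_comp, finset_sum_coeff]
  exact Finset.sum_congr rfl fun s _ => by rw [coeff_C_mul, coeff_X_add_one_pow]

lemma coeff_xacomp (M v : ℕ) : ((X+1) * (aP M).comp (X+1)).coeff v
    = ∑ s ∈ range (M+1), ((M-s).choose s : ℚ) * (s+1).choose v := by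
  rw [aP_as_sum, poly_sum_comp, Finset.mul_sum, finset_sum_coeff]
  refine Finset.sum_congr rfl fun s _ => ?_
  rw [show (X+1) * (C (((M-s).choose s : ℚ)) * (X+1)^s)
      = C (((M-s).choose s : ℚ)) * (X+1)^(s+1) from by ring,
    coeff_C_mul, coeff_X_add_one_pow]

lemma coeffB (n v : ℕ) : ((gP (n+2)).comp (X+1)).coeff v
    = (∑ s ∈ range (n+3), ((n+2-s).choose s : ℚ) * s.choose v)
      + ∑ s ∈ range (n+1), ((n-s).choose s : ℚ) * (s+1).choose v := by
  rw [gP_eq, add_comp, mul_comp, X_comp, coeff_add, coeff_acomp, coeff_xacomp]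

def Qd (k s : ℕ) : ℕ := if s = 0 then 1 else (2*k+1-s).choose s + (2*k-s).choose (s-1)

lemma keyQ (k : ℕ) {s : ℕ} (hs : s ≤ k) (hk : 1 ≤ k) :
    (2*k+1-s) * Qd k s = (2*k+1) * (2*k+1-s).choose s := by
  rcases s with _ | t
  · simp [Qd]
  · have ht : t + 1 ≤ k := hs
    unfold Qd
    rw [if_neg (Nat.succ_ne_zero t)]
    have e1 : 2*k+1-(t+1) = 2*k-t := by omega
    have e2 : t+1-1 = t := by omega
    rw [e1, e2]
    have h' : (2*k-t) * (2*k-t-1).choose t = (2*k-t).choose (t+1) * (t+1) := by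
      have := Nat.add_one_mul_choose_eq (2*k-t-1) t
      rwa [show 2*k-t-1+1 = 2*k-t from by omega] at this
    calc (2*k-t) * ((2*k-t).choose (t+1) + (2*k-t-1).choose t)
        = (2*k-t) * (2*k-t).choose (t+1) + (2*k-t) * (2*k-t-1).choose t := by ring
      _ = (2*k-t) * (2*k-t).choose (t+1) + (2*k-t).choose (t+1) * (t+1) := by rw [h']
      _ = ((2*k-t) + (t+1)) * (2*k-t).choose (t+1) := by ring
      _ = (2*k+1) * (2*k-t).choose (t+1) := by rw [show 2*k-t+(t+1) = 2*k+1 from by omega]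

lemma Bsum (k v : ℕ) (hk : 1 ≤ k) :
    (∑ s ∈ range (2*k+2), (2*k+1-s).choose s * s.choose v)
      + (∑ s ∈ range (2*k), (2*k-1-s).choose s * (s+1).choose v)
    = ∑ s ∈ Icc v k, Qd k s * s.choose v := by
  have h2 : (∑ t ∈ range (2*k+2), (if t = 0 then 0 else (2*k-t).choose (t-1)) * t.choose v)
      = ∑ s ∈ range (2*k), (2*k-1-s).choose s * (s+1).choose v := by
    rw [Finset.sum_range_succ (fun t => (if t = 0 then 0 else (2*k-t).choose (t-1)) * t.choose v) (2*k+1)]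
    rw [Finset.sum_range_succ' (fun t => (if t = 0 then 0 else (2*k-t).choose (t-1)) * t.choose v) (2*k)]
    rw [if_neg (by omega : ¬ (2*k+1 = 0)), Nat.choose_eq_zero_of_lt (by omega : 2*k-(2*k+1) < 2*k+1-1)]
    simp only [eq_self_iff_true, if_true, zero_mul, mul_zero, add_zero, zero_add]
    refine Finset.sum_congr rfl fun s _ => ?_
    rw [if_neg (Nat.succ_ne_zero s), show s+1-1 = s from rfl, show 2*k-(s+1) = 2*k-1-s from by omega]
  rw [← h2, ← Finset.sum_add_distrib]
  have h3 : ∀ s, (2*k+1-s).choose s * s.choose v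
      + (if s = 0 then 0 else (2*k-s).choose (s-1)) * s.choose v = Qd k s * s.choose v := by
    intro s
    rcases s with _ | t
    · simp [Qd]
    · simp only [Qd, if_neg (Nat.succ_ne_zero t)]
      ring
  simp only [h3]
  refine (Finset.sum_subset ?_ ?_).symm
  · intro s hs
    simp only [Finset.mem_Icc] at hs
    simp only [Finset.mem_range]
    omega
  · intro s hs hns
    simp only [Finset.mem_range] at hs
    simp only [Finset.mem_Icc] at hns
    rcases le_or_gt v s with h | h
    · have hsk : k < s := by omega
      have h0 : Qd k s = 0 := by
        unfold Qd
        rw [if_neg (by omega : ¬ s = 0)]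
        rw [Nat.choose_eq_zero_of_lt (by omega), Nat.choose_eq_zero_of_lt (by omega)]
      rw [h0, zero_mul]
    · rw [Nat.choose_eq_zero_of_lt h, mul_zero]

lemma Asum (k v : ℕ) (hv : v ≤ k) :
    ∑ s ∈ range (2*k+2), (2*k+1).choose (2*s) * s.choose v * 5^(s-v)
    = ∑ s ∈ Icc v k, (2*k+1).choose (2*s) * s.choose v * 5^(s-v) := by
  refine (Finset.sum_subset ?_ ?_).symm
  · intro s hs
    simp only [mem_Icc] at hs
    simp only [mem_range]
    omega
  · intro s hs hns
    simp only [mem_range] at hs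
    simp only [mem_Icc] at hns
    rcases le_or_gt v s with h | h
    · rw [Nat.choose_eq_zero_of_lt (by omega : 2*k+1 < 2*s), zero_mul, zero_mul]
    · rw [Nat.choose_eq_zero_of_lt h, mul_zero, zero_mul]


/-- The two formulas for the number of v-faces of E(C_N), N = 2k+1 ≥ 3, agree:
(1/2^(N-2v-1))·Σ_{s=v}^{k} C(N,2s)·C(s,v)·5^(s-v) = Σ_{s=v}^{k} (N/(N-s))·C(N-s,s)·C(s,v),
stated with the power of 2 cleared (N - 2v - 1 = 2(k-v)). -/
theorem face_count_formulas_agree (k v : ℕ) (hk : 1 ≤ k) (hv : v ≤ k) :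
    (∀ s ≤ k, (2 * k + 1 - s) ∣ (2 * k + 1) * (2 * k + 1 - s).choose s) ∧
    ∑ s ∈ Finset.Icc v k, (2 * k + 1).choose (2 * s) * s.choose v * 5 ^ (s - v)
      = 2 ^ (2 * k - 2 * v) *
        ∑ s ∈ Finset.Icc v k,
          ((2 * k + 1) * (2 * k + 1 - s).choose s / (2 * k + 1 - s)) * s.choose v := by
  constructor
  · intro s hs
    exact ⟨Qd k s, (keyQ k hs hk).symm⟩
  · have hdiv : ∀ s ∈ Icc v k, (2*k+1) * (2*k+1-s).choose s / (2*k+1-s) = Qd k s := by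
      intro s hs
      simp only [mem_Icc] at hs
      rw [← keyQ k hs.2 hk, Nat.mul_div_cancel_left _ (by omega : 0 < 2*k+1-s)]
    rw [show (∑ s ∈ Icc v k, (2*k+1) * (2*k+1-s).choose s / (2*k+1-s) * s.choose v)
        = ∑ s ∈ Icc v k, Qd k s * s.choose v from
      Finset.sum_congr rfl fun s hs => by rw [hdiv s hs]]
    have H : ((2 : ℚ[X]) * (fP (2*k+1)).comp (4*X+5)).coeff v
        = ((2:ℚ[X])^(2*k+1) * (gP (2*k+1)).comp (X+1)).coeff v := by rw [main_comp]
    rw [coeff_ofNat_mul] at H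
    have hc : ((2:ℚ[X])^(2*k+1)) = C ((2:ℚ)^(2*k+1)) := by
      rw [map_pow]
      norm_num [map_ofNat]
    rw [hc, coeff_C_mul] at H
    rw [coeffA] at H
    have hgp : ((gP (2*k+1)).comp (X+1)).coeff v
        = (∑ s ∈ range (2*k+2), ((2*k+1-s).choose s : ℚ) * s.choose v)
          + ∑ s ∈ range (2*k), ((2*k-1-s).choose s : ℚ) * (s+1).choose v := by
      have h := coeffB (2*k-1) v
      rw [show 2*k-1+2 = 2*k+1 from by omega, show 2*k-1+3 = 2*k+2 from by omega,
        show 2*k-1+1 = 2*k from by omega] at h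
      exact h
    rw [hgp] at H
    have hBq : (∑ s ∈ range (2*k+2), ((2*k+1-s).choose s : ℚ) * s.choose v)
        + (∑ s ∈ range (2*k), ((2*k-1-s).choose s : ℚ) * (s+1).choose v)
        = ((∑ s ∈ Icc v k, Qd k s * s.choose v : ℕ) : ℚ) := by
      rw [← Bsum k v hk]
      push_cast
      ring
    have hAq : (∑ s ∈ range (2*k+2), ((2*k+1).choose (2*s) : ℚ) * (s.choose v) * 4^v * 5^(s-v))
        = 4^v * ((∑ s ∈ Icc v k, (2*k+1).choose (2*s) * s.choose v * 5^(s-v) : ℕ) : ℚ) := by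
      rw [← Asum k v hv]
      push_cast
      rw [Finset.mul_sum]
      exact Finset.sum_congr rfl fun s _ => by ring
    rw [hAq, hBq] at H
    have hpow : (2:ℚ)^(2*k+1) = (2 * 4^v) * 2^(2*k-2*v) := by
      have h4 : (2:ℚ) * (2^2)^v * 2^(2*k-2*v) = 2^(1 + 2*v + (2*k-2*v)) := by
        rw [← pow_mul, pow_add, pow_add, pow_one]
      rw [show (4:ℚ) = 2^2 from by norm_num, h4, show 1+2*v+(2*k-2*v) = 2*k+1 from by omega]
    rw [hpow] at H
    have hne : (2:ℚ) * 4^v ≠ 0 := by positivity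
    have key : ((∑ s ∈ Icc v k, (2*k+1).choose (2*s) * s.choose v * 5^(s-v) : ℕ) : ℚ)
        = 2^(2*k-2*v) * ((∑ s ∈ Icc v k, Qd k s * s.choose v : ℕ) : ℚ) := by
      apply mul_left_cancel₀ hne
      linear_combination H
    exact_mod_cast key
end
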